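/- Let M be a positive integer, h > 0, and let u⁰, u¹, v⁰, v¹ be periodic grid functions satisfying v^k_i = δ_x² u^k_i − (h²/12)·δ_x² v^k_i for all i and k = 0, 1. Then (v¹ − v⁰, (u⁰ + u¹)/2) = −(1/2)·[(|u¹|₁² − |u⁰|₁²) + (h²/12)·(‖v¹‖² − ‖v⁰‖²) − (h⁴/144)·(|v¹|₁² − |v⁰|₁²)]. (Key energy-pairing identity, equation (2.25) in the proof of Theorem 1.) -/
import Mathlib


open Finset

namespace BBMB

/-- A periodic grid function with period `M`. -/
def Periodic (M : ℕ) (u : ℤ → ℝ) : Prop := ∀ i : ℤ, u (i + (M : ℤ)) = u i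

/-- Forward difference `δ_x u_{i+1/2} = (u_{i+1} - u_i)/h`. -/
noncomputable def dxp (h : ℝ) (u : ℤ → ℝ) (i : ℤ) : ℝ := (u (i + 1) - u i) / h

/-- Backward difference `δ_x u_{i-1/2} = (u_i - u_{i-1})/h`. -/
noncomputable def dxm (h : ℝ) (u : ℤ → ℝ) (i : ℤ) : ℝ := (u i - u (i - 1)) / h

/-- Second difference `δ_x² u_i = (u_{i+1} - 2 u_i + u_{i-1})/h²`. -/
noncomputable def dxx (h : ℝ) (u : ℤ → ℝ) (i : ℤ) : ℝ :=
  (u (i + 1) - 2 * u i + u (i - 1)) / h ^ 2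

/-- Centered difference `Δ_x u_i = (u_{i+1} - u_{i-1})/(2h)`. -/
noncomputable def Dx (h : ℝ) (u : ℤ → ℝ) (i : ℤ) : ℝ := (u (i + 1) - u (i - 1)) / (2 * h)

/-- Discrete inner product `(u, w) = h ∑_{i=1}^{M} u_i w_i`. -/
noncomputable def ip (M : ℕ) (h : ℝ) (u w : ℤ → ℝ) : ℝ :=
  h * ∑ i ∈ Finset.Icc (1 : ℤ) (M : ℤ), u i * w i

/-- Discrete inner product `⟨δ_x u, δ_x w⟩ = h ∑_{i=1}^{M} (δ_x u_{i-1/2})(δ_x w_{i-1/2})`. -/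
noncomputable def dip (M : ℕ) (h : ℝ) (u w : ℤ → ℝ) : ℝ :=
  h * ∑ i ∈ Finset.Icc (1 : ℤ) (M : ℤ), dxm h u i * dxm h w i

/-- Discrete `L²` norm `‖u‖ = √((u,u))`. -/
noncomputable def nrm (M : ℕ) (h : ℝ) (u : ℤ → ℝ) : ℝ := Real.sqrt (ip M h u u)

/-- Discrete `H¹` seminorm `|u|₁ = √(⟨δ_x u, δ_x u⟩)`. -/
noncomputable def snorm (M : ℕ) (h : ℝ) (u : ℤ → ℝ) : ℝ := Real.sqrt (dip M h u u)

/-- Trilinear term `ψ(u,v)_i = (1/3) (u_i Δ_x v_i + Δ_x (u·v)_i)`. -/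
noncomputable def psi (h : ℝ) (u v : ℤ → ℝ) (i : ℤ) : ℝ :=
  (1 / 3) * (u i * Dx h v i + Dx h (fun j => u j * v j) i)

/-! ### Auxiliary lemmas -/

lemma sum_shift (M : ℕ) (hM : 0 < M) (F : ℤ → ℝ) (hF : ∀ i, F (i + (M : ℤ)) = F i) :
    ∑ i ∈ Finset.Icc (1 : ℤ) (M : ℤ), F (i + 1) = ∑ i ∈ Finset.Icc (1 : ℤ) (M : ℤ), F i := by
  have h1 : (1 : ℤ) ≤ (M : ℤ) := by exact_mod_cast hM
  have e1 : ∑ i ∈ Finset.Icc (1 : ℤ) (M : ℤ), F (i + 1)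
      = ∑ i ∈ Finset.Icc (2 : ℤ) ((M : ℤ) + 1), F i := by
    have : Finset.Icc (2 : ℤ) ((M : ℤ) + 1)
        = (Finset.Icc (1 : ℤ) (M : ℤ)).map (addRightEmbedding 1) := by
      rw [Finset.map_add_right_Icc]
      norm_num
    rw [this, Finset.sum_map]
    rfl
  have e2 : Finset.Icc (2 : ℤ) ((M : ℤ) + 1)
      = insert ((M : ℤ) + 1) (Finset.Icc (2 : ℤ) (M : ℤ)) := by
    ext x; simp only [Finset.mem_Icc, Finset.mem_insert]; omega
  have e3 : Finset.Icc (1 : ℤ) (M : ℤ) = insert (1 : ℤ) (Finset.Icc (2 : ℤ) (M : ℤ)) := by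
    ext x; simp only [Finset.mem_Icc, Finset.mem_insert]; omega
  have h4 : ((M : ℤ) + 1) ∉ Finset.Icc (2 : ℤ) (M : ℤ) := by
    simp only [Finset.mem_Icc]; omega
  have h5 : (1 : ℤ) ∉ Finset.Icc (2 : ℤ) (M : ℤ) := by
    simp only [Finset.mem_Icc]; omega
  have h6 : F ((M : ℤ) + 1) = F 1 := by
    have := hF 1
    rwa [add_comm] at this
  rw [e1, e2, Finset.sum_insert h4, h6, e3, Finset.sum_insert h5]

/-- Summation by parts for periodic grid functions. -/
lemma sbp (M : ℕ) (h : ℝ) (hM : 0 < M) (hh : 0 < h) (a b : ℤ → ℝ)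
    (ha : Periodic M a) (hb : Periodic M b) :
    ip M h (fun i => dxx h a i) b = - dip M h a b := by
  have hne : h ≠ 0 := ne_of_gt hh
  have hper : ∀ i : ℤ, dxm h a (i + (M : ℤ)) * b (i + (M : ℤ) - 1) = dxm h a i * b (i - 1) := by
    intro i
    have ha' : ∀ j : ℤ, a (j + (M : ℤ)) = a j := ha
    have hb' : ∀ j : ℤ, b (j + (M : ℤ)) = b j := hb
    have e1 : i + (M : ℤ) - 1 = (i - 1) + (M : ℤ) := by ring
    simp only [dxm, e1, ha', hb']
  calc ip M h (fun i => dxx h a i) b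
      = ∑ i ∈ Finset.Icc (1 : ℤ) (M : ℤ), (dxm h a (i + 1) * b i - dxm h a i * b i) := by
        rw [ip, Finset.mul_sum]
        refine Finset.sum_congr rfl fun i _ => ?_
        simp only [dxx, dxm, add_sub_cancel_right]
        field_simp
        ring
    _ = ∑ i ∈ Finset.Icc (1 : ℤ) (M : ℤ), (dxm h a i * b (i - 1) - dxm h a i * b i) := by
        rw [Finset.sum_sub_distrib, Finset.sum_sub_distrib]
        congr 1
        have := sum_shift M hM (fun i => dxm h a i * b (i - 1)) hper
        simpa using this
    _ = - dip M h a b := by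
        rw [dip, Finset.mul_sum, ← Finset.sum_neg_distrib]
        refine Finset.sum_congr rfl fun i _ => ?_
        simp only [dxm]
        field_simp
        ring

lemma ip_comm (M : ℕ) (h : ℝ) (u w : ℤ → ℝ) : ip M h u w = ip M h w u := by
  simp only [ip]; congr 1; exact Finset.sum_congr rfl fun i _ => mul_comm _ _

lemma dip_comm (M : ℕ) (h : ℝ) (u w : ℤ → ℝ) : dip M h u w = dip M h w u := by
  simp only [dip]; congr 1; exact Finset.sum_congr rfl fun i _ => mul_comm _ _

lemma ip_sub_smul_left (M : ℕ) (h : ℝ) (x y w : ℤ → ℝ) (c : ℝ) :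
    ip M h (fun i => x i - c * y i) w = ip M h x w - c * ip M h y w := by
  simp only [ip, sub_mul, mul_assoc]
  rw [Finset.sum_sub_distrib, ← Finset.mul_sum]
  ring

lemma ip_add_smul_left (M : ℕ) (h : ℝ) (x y w : ℤ → ℝ) (c : ℝ) :
    ip M h (fun i => x i + c * y i) w = ip M h x w + c * ip M h y w := by
  simp only [ip, add_mul, mul_assoc]
  rw [Finset.sum_add_distrib, ← Finset.mul_sum]
  ring

lemma ip_avg_left (M : ℕ) (h : ℝ) (x y w : ℤ → ℝ) :
    ip M h (fun i => (x i + y i) / 2) w = (ip M h x w + ip M h y w) / 2 := by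
  simp only [ip]
  rw [show ∀ s : Finset ℤ, ∑ i ∈ s, (x i + y i) / 2 * w i
      = ∑ i ∈ s, (x i * w i + y i * w i) / 2 from fun s =>
        Finset.sum_congr rfl fun i _ => by ring]
  rw [← Finset.sum_div, Finset.sum_add_distrib]
  ring

lemma ip_sub_right (M : ℕ) (h : ℝ) (w x y : ℤ → ℝ) :
    ip M h w (fun i => x i - y i) = ip M h w x - ip M h w y := by
  simp only [ip, mul_sub]
  rw [Finset.sum_sub_distrib]
  ring

lemma dxm_sub (h : ℝ) (x y : ℤ → ℝ) (i : ℤ) :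
    dxm h (fun j => x j - y j) i = dxm h x i - dxm h y i := by
  simp only [dxm]; ring

lemma dxm_avg (h : ℝ) (x y : ℤ → ℝ) (i : ℤ) :
    dxm h (fun j => (x j + y j) / 2) i = (dxm h x i + dxm h y i) / 2 := by
  simp only [dxm]; ring

lemma dxx_sub (h : ℝ) (x y : ℤ → ℝ) (i : ℤ) :
    dxx h (fun j => x j - y j) i = dxx h x i - dxx h y i := by
  simp only [dxx]; ring

lemma dxx_avg (h : ℝ) (x y : ℤ → ℝ) (i : ℤ) :
    dxx h (fun j => (x j + y j) / 2) i = (dxx h x i + dxx h y i) / 2 := by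
  simp only [dxx]; ring

lemma dip_sub_left (M : ℕ) (h : ℝ) (x y w : ℤ → ℝ) :
    dip M h (fun i => x i - y i) w = dip M h x w - dip M h y w := by
  simp only [dip, dxm_sub, sub_mul]
  rw [Finset.sum_sub_distrib]
  ring

lemma dip_sub_right (M : ℕ) (h : ℝ) (w x y : ℤ → ℝ) :
    dip M h w (fun i => x i - y i) = dip M h w x - dip M h w y := by
  simp only [dip, dxm_sub, mul_sub]
  rw [Finset.sum_sub_distrib]
  ring

lemma dip_avg_right (M : ℕ) (h : ℝ) (w x y : ℤ → ℝ) :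
    dip M h w (fun i => (x i + y i) / 2) = (dip M h w x + dip M h w y) / 2 := by
  simp only [dip, dxm_avg]
  rw [show ∀ s : Finset ℤ, ∑ i ∈ s, dxm h w i * ((dxm h x i + dxm h y i) / 2)
      = ∑ i ∈ s, (dxm h w i * dxm h x i + dxm h w i * dxm h y i) / 2 from fun s =>
        Finset.sum_congr rfl fun i _ => by ring]
  rw [← Finset.sum_div, Finset.sum_add_distrib]
  ring

lemma nrm_sq (M : ℕ) (h : ℝ) (hh : 0 < h) (u : ℤ → ℝ) : (nrm M h u) ^ 2 = ip M h u u := by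
  rw [nrm, Real.sq_sqrt]
  exact mul_nonneg hh.le (Finset.sum_nonneg fun i _ => mul_self_nonneg _)

lemma snorm_sq (M : ℕ) (h : ℝ) (hh : 0 < h) (u : ℤ → ℝ) :
    (snorm M h u) ^ 2 = dip M h u u := by
  rw [snorm, Real.sq_sqrt]
  exact mul_nonneg hh.le (Finset.sum_nonneg fun i _ => mul_self_nonneg _)

lemma periodic_sub (M : ℕ) (x y : ℤ → ℝ) (hx : Periodic M x) (hy : Periodic M y) :
    Periodic M (fun i => x i - y i) := fun i => by simp only [hx i, hy i]

lemma periodic_avg (M : ℕ) (x y : ℤ → ℝ) (hx : Periodic M x) (hy : Periodic M y) :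
    Periodic M (fun i => (x i + y i) / 2) := fun i => by simp only [hx i, hy i]

/-- Key energy-pairing identity (2.25) in the proof of Theorem 1. -/
theorem energy_pairing (M : ℕ) (h : ℝ) (u0 u1 v0 v1 : ℤ → ℝ)
    (hM : 0 < M) (hh : 0 < h)
    (hu0 : Periodic M u0) (hu1 : Periodic M u1)
    (hv0 : Periodic M v0) (hv1 : Periodic M v1)
    (hrel0 : ∀ i : ℤ, v0 i = dxx h u0 i - h ^ 2 / 12 * dxx h v0 i)
    (hrel1 : ∀ i : ℤ, v1 i = dxx h u1 i - h ^ 2 / 12 * dxx h v1 i) :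
    ip M h (fun i => v1 i - v0 i) (fun i => (u0 i + u1 i) / 2) =
      -(1 / 2) * (((snorm M h u1) ^ 2 - (snorm M h u0) ^ 2)
        + h ^ 2 / 12 * ((nrm M h v1) ^ 2 - (nrm M h v0) ^ 2)
        - h ^ 4 / 144 * ((snorm M h v1) ^ 2 - (snorm M h v0) ^ 2)) := by
  have hA : Periodic M (fun i => u1 i - u0 i) := periodic_sub M u1 u0 hu1 hu0
  have hC : Periodic M (fun i => v1 i - v0 i) := periodic_sub M v1 v0 hv1 hv0
  have hW : Periodic M (fun i => (u0 i + u1 i) / 2) := periodic_avg M u0 u1 hu0 hu1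
  have key1 : (fun i => v1 i - v0 i)
      = (fun i => dxx h (fun j => u1 j - u0 j) i
          - h ^ 2 / 12 * dxx h (fun j => v1 j - v0 j) i) := by
    funext i
    rw [dxx_sub, dxx_sub, hrel1 i, hrel0 i]
    ring
  have e1 : ip M h (fun i => v1 i - v0 i) (fun i => (u0 i + u1 i) / 2)
      = - dip M h (fun i => u1 i - u0 i) (fun i => (u0 i + u1 i) / 2)
        + h ^ 2 / 12 * dip M h (fun i => v1 i - v0 i) (fun i => (u0 i + u1 i) / 2) := by
    conv_lhs => rw [key1]
    rw [ip_sub_smul_left,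
        sbp M h hM hh (fun j => u1 j - u0 j) (fun i => (u0 i + u1 i) / 2) hA hW,
        sbp M h hM hh (fun j => v1 j - v0 j) (fun i => (u0 i + u1 i) / 2) hC hW]
    ring
  have r0 : ∀ i : ℤ, dxx h u0 i = v0 i + h ^ 2 / 12 * dxx h v0 i := by
    intro i; rw [hrel0 i]; ring
  have r1 : ∀ i : ℤ, dxx h u1 i = v1 i + h ^ 2 / 12 * dxx h v1 i := by
    intro i; rw [hrel1 i]; ring
  have key2 : (fun i => dxx h (fun j => (u0 j + u1 j) / 2) i)
      = (fun i => (v0 i + v1 i) / 2 + h ^ 2 / 12 * ((dxx h v0 i + dxx h v1 i) / 2)) := by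
    funext i
    rw [dxx_avg, r0 i, r1 i]
    ring
  have e2 : dip M h (fun i => v1 i - v0 i) (fun i => (u0 i + u1 i) / 2)
      = -(((ip M h v0 v1 - ip M h v0 v0) + (ip M h v1 v1 - ip M h v0 v1)) / 2
          + h ^ 2 / 12 * ((-(dip M h v0 v1 - dip M h v0 v0))
            + (-(dip M h v1 v1 - dip M h v0 v1))) / 2) := by
    have e := sbp M h hM hh (fun i => (u0 i + u1 i) / 2) (fun i => v1 i - v0 i) hW hC
    rw [key2, ip_add_smul_left, ip_avg_left, ip_avg_left, ip_sub_right, ip_sub_right,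
        sbp M h hM hh v0 (fun i => v1 i - v0 i) hv0 hC,
        sbp M h hM hh v1 (fun i => v1 i - v0 i) hv1 hC,
        dip_sub_right, dip_sub_right, ip_comm M h v1 v0, dip_comm M h v1 v0] at e
    rw [dip_comm M h (fun i => v1 i - v0 i) (fun i => (u0 i + u1 i) / 2)]
    linear_combination e
  have e3 : dip M h (fun i => u1 i - u0 i) (fun i => (u0 i + u1 i) / 2)
      = (dip M h u0 u1 + dip M h u1 u1) / 2 - (dip M h u0 u0 + dip M h u0 u1) / 2 := by
    rw [dip_sub_left, dip_avg_right, dip_avg_right, dip_comm M h u1 u0]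
  rw [e1, e2, e3, snorm_sq M h hh u1, snorm_sq M h hh u0, snorm_sq M h hh v1,
      snorm_sq M h hh v0, nrm_sq M h hh v1, nrm_sq M h hh v0]
  ring

end BBMB
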